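/- For any real number M > 1, the set of operators T ∈ B_M(H) having no eigenvalue (i.e., such that there is no λ ∈ ℂ and nonzero x ∈ H with Tx = λx) is a dense Gδ subset of the topological space (B_M(H), SOT*). -/

import Mathlib

noncomputable section
open Filter Set Submodule
open scoped ENNReal Topology
local notation "⟪" x ", " y "⟫" => @inner ℂ _ _ x y

namespace SotStar

variable {I : Type*}

lemma memlp_comp (σ : I ≃ I) (f : lp (fun _ : I => ℂ) 2) :
    Memℓp (fun j => f (σ j)) 2 := by
  apply memℓp_gen
  have h := (lp.memℓp f).summable (by norm_num : (0:ℝ) < (2:ℝ≥0∞).toReal)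
  have h2 := (σ.summable_iff (f := fun i => ‖f i‖ ^ (2:ℝ≥0∞).toReal)).mpr h
  simpa [Function.comp_def] using h2

/-- The isometry of `ℓ²(I,ℂ)` induced by a permutation of `I`. -/
def lpCongr (σ : I ≃ I) : lp (fun _ : I => ℂ) 2 ≃ₗᵢ[ℂ] lp (fun _ : I => ℂ) 2 where
  toFun f := ⟨fun j => f (σ.symm j), memlp_comp σ.symm f⟩
  invFun f := ⟨fun j => f (σ j), memlp_comp σ f⟩
  left_inv f := by apply lp.ext; funext j; simp
  right_inv f := by apply lp.ext; funext j; simp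
  map_add' f g := by apply lp.ext; funext j; simp [lp.coeFn_add]; rfl
  map_smul' c f := by apply lp.ext; funext j; simp [lp.coeFn_smul]
  norm_map' f := by
    have h2 : (0:ℝ) < (2:ℝ≥0∞).toReal := by norm_num
    rw [lp.norm_eq_tsum_rpow h2, lp.norm_eq_tsum_rpow h2]
    congr 1
    exact σ.symm.tsum_eq (fun i => ‖f i‖ ^ (2:ℝ≥0∞).toReal)

lemma lpCongr_apply (σ : I ≃ I) (f : lp (fun _ : I => ℂ) 2) (j : I) :
    lpCongr σ f j = f (σ.symm j) := rfl

variable {H : Type*} [NormedAddCommGroup H] [InnerProductSpace ℂ H] [CompleteSpace H]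

/-- The unitary on `H` permuting a Hilbert basis. -/
def shiftIso (b : HilbertBasis I ℂ H) (σ : I ≃ I) : H ≃ₗᵢ[ℂ] H :=
  b.repr.trans ((lpCongr σ).trans b.repr.symm)

lemma shiftIso_apply (b : HilbertBasis I ℂ H) (σ : I ≃ I) (i : I) :
    shiftIso b σ (b i) = b (σ i) := by
  classical
  have h1 : lpCongr σ (lp.single 2 i 1) = lp.single 2 (σ i) (1:ℂ) := by
    apply lp.ext; funext j
    rw [lpCongr_apply]
    rcases eq_or_ne j (σ i) with rfl | hj
    · rw [lp.single_apply, lp.single_apply]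
      simp
    · rw [lp.single_apply, lp.single_apply]
      have : σ.symm j ≠ i := fun h => hj (by rw [← h, Equiv.apply_symm_apply])
      simp [hj, this]
  simp only [shiftIso, LinearIsometryEquiv.trans_apply]
  rw [HilbertBasis.repr_self, h1, HilbertBasis.repr_symm_single]

lemma shiftIso_symm_apply (b : HilbertBasis I ℂ H) (σ : I ≃ I) (x : H) :
    (shiftIso b σ).symm x = shiftIso b σ.symm x := by
  apply (shiftIso b σ).injective
  rw [LinearIsometryEquiv.apply_symm_apply]
  simp only [shiftIso, LinearIsometryEquiv.trans_apply, LinearIsometryEquiv.apply_symm_apply]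
  have : lpCongr σ (lpCongr σ.symm (b.repr x)) = b.repr x := by
    apply lp.ext; funext j
    rw [lpCongr_apply, lpCongr_apply]
    simp
  rw [this, LinearIsometryEquiv.symm_apply_apply]

lemma inner_shiftIso (b : HilbertBasis I ℂ H) (σ : I ≃ I) (x : H) (i : I) :
    ⟪b i, shiftIso b σ x⟫ = ⟪b (σ.symm i), x⟫ := by
  conv_lhs => rw [show b i = shiftIso b σ (b (σ.symm i)) by
    rw [shiftIso_apply, Equiv.apply_symm_apply]]
  exact (shiftIso b σ).inner_map_map _ _

lemma inner_shiftIso_left (b : HilbertBasis I ℂ H) (σ : I ≃ I) (x y : H) :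
    ⟪shiftIso b σ x, y⟫ = ⟪x, (shiftIso b σ).symm y⟫ := by
  conv_lhs => rw [show y = shiftIso b σ ((shiftIso b σ).symm y) by
    rw [LinearIsometryEquiv.apply_symm_apply]]
  exact (shiftIso b σ).inner_map_map _ _

/-- orthonormal sets in a separable space are countable -/
lemma orthonormal_set_countable [TopologicalSpace.SeparableSpace H] {w : Set H}
    (hw : Orthonormal ℂ ((↑) : w → H)) : w.Countable := by
  obtain ⟨D, hDc, hDd⟩ := TopologicalSpace.exists_countable_dense H
  have key : ∀ x : w, ∃ y : H, y ∈ D ∧ dist (x:H) y < 1/2 := by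
    intro x
    have := Metric.dense_iff.mp hDd (x:H) (1/2) (by norm_num)
    obtain ⟨y, hy1, hy2⟩ := this
    exact ⟨y, hy2, by simpa [Metric.mem_ball, dist_comm] using hy1⟩
  choose φ hφD hφd using key
  have hinj : Function.Injective φ := by
    intro x y hxy
    by_contra hne
    have h2 : ‖(x:H) - (y:H)‖^2 = 2 := by
      rw [@norm_sub_sq ℂ]
      have hx := hw.1 x
      have hy := hw.1 y
      have hxy0 : ⟪(x:H), (y:H)⟫ = 0 := hw.2 hne
      rw [hxy0, hx, hy]
      norm_num
    have hgt : (1:ℝ) < ‖(x:H) - (y:H)‖ := by nlinarith [norm_nonneg ((x:H) - (y:H))]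
    have : dist (x:H) (y:H) < 1 := by
      calc dist (x:H) (y:H) ≤ dist (x:H) (φ x) + dist (φ y) (y:H) := by
            rw [hxy]; exact dist_triangle _ _ _
        _ < 1/2 + 1/2 := by
            have := hφd x
            have h2 := hφd y
            rw [dist_comm (φ y)] at *
            linarith
        _ = 1 := by norm_num
    rw [dist_eq_norm] at this
    linarith
  rw [← Set.countable_coe_iff]
  have : Countable ↥D := hDc.to_subtype
  exact Function.Injective.countable (f := fun x : w => (⟨φ x, hφD x⟩ : D))
    (fun a b h => hinj (congrArg Subtype.val h))

lemma hilbertBasis_infinite (b : HilbertBasis I ℂ H) (hdim : ¬ FiniteDimensional ℂ H) :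
    Infinite I := by
  by_contra hfin
  rw [not_infinite_iff_finite] at hfin
  have h1 : FiniteDimensional ℂ (span ℂ (Set.range ⇑b)) :=
    FiniteDimensional.span_of_finite ℂ (Set.finite_range _)
  have h2 : IsClosed ((span ℂ (Set.range ⇑b) : Submodule ℂ H) : Set H) :=
    Submodule.closed_of_finiteDimensional _
  have h5 : span ℂ (Set.range ⇑b) = ⊤ := by
    rw [← h2.submodule_topologicalClosure_eq]
    exact b.dense_span
  rw [h5] at h1
  haveI := h1
  exact hdim (LinearEquiv.finiteDimensional Submodule.topEquiv)


lemma exists_reindex {α : Type*} [Countable α] [Infinite α] {d : ℕ} (hd : 0 < d)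
    (g : Fin d → α) (hg : Function.Injective g) :
    ∃ ψ : (ℤ × Fin d) ≃ α, ∀ k, ψ (0, k) = g k := by
  classical
  set p : ℤ × Fin d → Prop := fun i => i.1 = 0 with hp
  set q : α → Prop := fun a => a ∈ Set.range g with hq
  let e₁ : {i : ℤ × Fin d // p i} ≃ Fin d :=
    { toFun := fun i => i.1.2
      invFun := fun k => ⟨(0, k), rfl⟩
      left_inv := by rintro ⟨⟨n, k⟩, h⟩; simp only [hp] at h; subst h; rfl
      right_inv := fun k => rfl }
  let e₂ : Fin d ≃ {a // q a} :=
    Equiv.ofBijective (fun k => ⟨g k, Set.mem_range_self k⟩)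
      ⟨fun a b h => hg (congrArg Subtype.val h),
       fun x => by obtain ⟨a, ⟨k, rfl⟩⟩ := x; exact ⟨k, rfl⟩⟩
  haveI : Infinite {i : ℤ × Fin d // ¬p i} := by
    refine Infinite.of_injective
      (fun n : ℕ => ⟨((n : ℤ) + 1, ⟨0, hd⟩), by simp [hp]; omega⟩) ?_
    intro a b h
    have := congrArg (fun x => x.1.1) h
    simpa using this
  haveI : Infinite {a // ¬q a} := by
    rw [← not_finite_iff_infinite]
    intro hfin
    haveI : Finite {a // q a} := Finite.of_equiv (Fin d) e₂
    haveI : Finite α := Finite.of_equiv _ (Equiv.sumCompl q)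
    exact not_finite α
  obtain ⟨u₁⟩ := nonempty_denumerable {i : ℤ × Fin d // ¬p i}
  obtain ⟨u₂⟩ := nonempty_denumerable {a // ¬q a}
  letI := u₁; letI := u₂
  let e₃ : {i : ℤ × Fin d // ¬p i} ≃ {a // ¬q a} :=
    (Denumerable.eqv _).trans (Denumerable.eqv _).symm
  refine ⟨(Equiv.sumCompl p).symm.trans ((Equiv.sumCongr (e₁.trans e₂) e₃).trans
    (Equiv.sumCompl q)), fun k => ?_⟩
  have h1 : (Equiv.sumCompl p).symm (0, k) = Sum.inl ⟨(0, k), rfl⟩ :=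
    Equiv.sumCompl_symm_apply_of_pos (p := p) (a := (0, k)) rfl
  simp only [Equiv.trans_apply, h1, Equiv.sumCongr_apply, Sum.map_inl,
    Equiv.sumCompl_apply_inl]
  rfl


lemma norm_add_sq_of_inner_eq_zero {x y : H} (h : ⟪x, y⟫ = 0) :
    ‖x + y‖ ^ 2 = ‖x‖ ^ 2 + ‖y‖ ^ 2 := by
  rw [@norm_add_sq ℂ, h]
  simp

lemma key_ineq {M δ a t : ℝ} (hM : 0 < M) (hδ0 : 0 < δ) (hδ1 : δ ≤ 1) :
    (δ*M/2*a + (1-δ)*(M*t))^2 + (δ*M/2*t)^2 ≤ M^2*(a^2+t^2) := by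
  nlinarith [mul_nonneg (mul_nonneg (sq_nonneg M)
      (mul_nonneg hδ0.le (sub_nonneg.2 hδ1))) (sq_nonneg (a-t)),
    mul_nonneg (mul_nonneg (sq_nonneg M)
      (mul_nonneg hδ0.le (by linarith : (0:ℝ) ≤ 2-δ))) (sq_nonneg t),
    mul_nonneg (mul_nonneg (sq_nonneg M) hδ0.le) (sq_nonneg a),
    sq_nonneg ((1-δ/2)*M*a)]

lemma sq_le_sq_of_nonneg {x y : ℝ} (hx : 0 ≤ x) (hy : 0 ≤ y) (h : x^2 ≤ y^2) : x ≤ y := by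
  nlinarith

lemma mem_orthogonal_span {s : Set H} {x : H} (h : ∀ u ∈ s, ⟪u, x⟫ = 0) :
    x ∈ (span ℂ s)ᗮ := by
  rw [Submodule.mem_orthogonal]
  intro u hu
  induction hu using Submodule.span_induction with
  | mem u hu => exact h u hu
  | zero => simp
  | add u v _ _ hu hv => rw [inner_add_left, hu, hv, add_zero]
  | smul a u _ hu => rw [inner_smul_left, hu, mul_zero]

set_option maxHeartbeats 2000000 in
open ContinuousLinearMap in
theorem exists_good [TopologicalSpace.SeparableSpace H] (hdim : ¬ FiniteDimensional ℂ H)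
    (M : ℝ) (hM : 1 ≤ M) (T : H →L[ℂ] H) (hT : ‖T‖ ≤ M) (J : Finset H) {ε : ℝ} (hε : 0 < ε) :
    ∃ S : H →L[ℂ] H, ‖S‖ ≤ M ∧ (∀ (c : ℂ) (x : H), S x = c • x → x = 0) ∧
      ∀ y ∈ J, ‖S y - T y‖ < ε ∧ ‖(adjoint S) y - (adjoint T) y‖ < ε := by
  classical
  have hM0 : (0:ℝ) < M := lt_of_lt_of_le one_pos hM
  haveI : Nontrivial H := by
    by_contra h
    rw [not_nontrivial_iff_subsingleton] at h
    exact hdim inferInstance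
  obtain ⟨z, hz⟩ := exists_ne (0 : H)
  set z₀ : H := (‖z‖⁻¹ : ℂ) • z with hz₀def
  have hz₀1 : ‖z₀‖ = 1 := norm_smul_inv_norm hz
  have hz₀0 : z₀ ≠ 0 := by
    intro h; rw [h, norm_zero] at hz₀1; exact one_ne_zero hz₀1.symm
  -- the finite-dimensional subspace F
  set gen : Set H := ((J : Set H) ∪ (T '' J) ∪ ((adjoint T) '' J)) ∪ {z₀} with hgen
  have hgenfin : gen.Finite :=
    (((J.finite_toSet).union (J.finite_toSet.image _)).union
      (J.finite_toSet.image _)).union (Set.finite_singleton _)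
  set F : Submodule ℂ H := span ℂ gen with hFdef
  haveI hFfd : FiniteDimensional ℂ ↥F := FiniteDimensional.span_of_finite ℂ hgenfin
  haveI : Nontrivial ↥F := by
    refine ⟨⟨z₀, subset_span (Set.mem_union_right _ rfl)⟩, 0, ?_⟩
    intro h
    exact hz₀0 (by simpa using congrArg Subtype.val h)
  set d : ℕ := Module.finrank ℂ ↥F with hddef
  have hd : 0 < d := Module.finrank_pos
  set onb : OrthonormalBasis (Fin d) ℂ ↥F := stdOrthonormalBasis ℂ ↥F with honb
  set f : Fin d → H := fun k => ((onb k : ↥F) : H) with hfdef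
  have hfF : ∀ k, f k ∈ F := fun k => (onb k).2
  have hf_on : Orthonormal ℂ f := by
    rw [orthonormal_iff_ite]
    intro i j
    have h := orthonormal_iff_ite.mp onb.orthonormal i j
    rwa [Submodule.coe_inner] at h
  have hf_inj : Function.Injective f := hf_on.linearIndependent.injective
  have hf_span : span ℂ (Set.range f) = F := by
    have h1 : Set.range f = (F.subtype) '' (Set.range ⇑onb) := by
      rw [← Set.range_comp]; rfl
    have h2 : span ℂ (Set.range ⇑onb) = (⊤ : Submodule ℂ ↥F) := by
      rw [← OrthonormalBasis.coe_toBasis onb]; exact Module.Basis.span_eq _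
    rw [h1, Submodule.span_image, h2, Submodule.map_subtype_top]
  -- extend to a Hilbert basis indexed by ℤ × Fin d
  obtain ⟨w, bw, hsw, hbw⟩ := (hf_on.toSubtypeRange).exists_hilbertBasis_extension
  have hw_on : Orthonormal ℂ ((↑) : w → H) := by rw [← hbw]; exact bw.orthonormal
  haveI : Countable ↥w := (orthonormal_set_countable hw_on).to_subtype
  haveI : Infinite ↥w := hilbertBasis_infinite bw hdim
  obtain ⟨ψ, hψ⟩ := exists_reindex hd (fun k => (⟨f k, hsw (Set.mem_range_self k)⟩ : ↥w))
    (fun a b h => hf_inj (show f a = f b from congrArg (fun t : ↥w => (t : H)) h))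
  set v : ℤ × Fin d → H := fun i => ((ψ i : ↥w) : H) with hvdef
  have hv_on : Orthonormal ℂ v := by
    have h := bw.orthonormal.comp ψ ψ.injective
    rw [hbw] at h
    exact h
  have hv0 : ∀ k, v (0, k) = f k := fun k => by
    show ((ψ (0,k) : ↥w) : H) = f k
    rw [hψ]
  have hv_span : ⊤ ≤ (span ℂ (Set.range v)).topologicalClosure := by
    have hrange : Set.range v = w := by
      have : Set.range v = Subtype.val '' Set.range ψ := by
        rw [← Set.range_comp]; rfl
      rw [this, Equiv.range_eq_univ, Set.image_univ, Subtype.range_coe]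
    have h := bw.dense_span
    rw [hbw, Subtype.range_coe] at h
    rw [hrange, h]
  set b : HilbertBasis (ℤ × Fin d) ℂ H := HilbertBasis.mk hv_on hv_span with hbdef
  have hb : ∀ i, b i = v i := fun i => congrFun (HilbertBasis.coe_mk hv_on hv_span) i
  have hb0 : ∀ k, b (0, k) = f k := fun k => by rw [hb, hv0]
  have hbij : ∀ i j, ⟪b i, b j⟫ = if i = j then 1 else 0 := by
    intro i j
    exact orthonormal_iff_ite.mp b.orthonormal i j
  have hF : F = span ℂ (Set.range fun k => b (0, k)) := by
    have : (fun k => b (0, k)) = f := funext hb0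
    rw [this, hf_span]
  -- the shift
  set σ : (ℤ × Fin d) ≃ (ℤ × Fin d) := (Equiv.addRight (1:ℤ)).prodCongr (Equiv.refl (Fin d))
    with hσdef
  have hσ : ∀ i, σ i = (i.1 + 1, i.2) := fun i => rfl
  have hσs : ∀ i, σ.symm i = (i.1 - 1, i.2) := by
    intro i
    apply σ.injective
    rw [Equiv.apply_symm_apply, hσ]
    exact Prod.ext (by simp) rfl
  set U := shiftIso b σ with hUdef
  set UL : H →L[ℂ] H := U.toLinearIsometry.toContinuousLinearMap with hULdef
  set ULs : H →L[ℂ] H := (U.symm).toLinearIsometry.toContinuousLinearMap with hULsdef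
  have hULa : ∀ x, UL x = U x := fun x => rfl
  have hULsa : ∀ x, ULs x = U.symm x := fun x => rfl
  have hUb : ∀ i, UL (b i) = b (i.1 + 1, i.2) := by
    intro i; rw [hULa, hUdef, shiftIso_apply, hσ]
  have hUsb : ∀ i, ULs (b i) = b (i.1 - 1, i.2) := by
    intro i; rw [hULsa, hUdef, shiftIso_symm_apply, shiftIso_apply, hσs]
  have hUinner : ∀ x (i : ℤ × Fin d), ⟪b i, UL x⟫ = ⟪b (i.1 - 1, i.2), x⟫ := by
    intro x i; rw [hULa, hUdef, inner_shiftIso, hσs]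
  have hUUs : ∀ x y, ⟪ULs x, y⟫ = ⟪x, UL y⟫ := by
    intro x y
    rw [hULsa, hULa]
    calc ⟪U.symm x, y⟫ = ⟪U (U.symm x), U y⟫ := (U.inner_map_map _ _).symm
      _ = ⟪x, U y⟫ := by rw [U.apply_symm_apply]
  -- submodules
  set Fm : Submodule ℂ H := span ℂ (Set.range fun k : Fin d => b (-1, k)) with hFmdef
  set F1 : Submodule ℂ H := span ℂ (Set.range fun k : Fin d => b (1, k)) with hF1def
  set K : Submodule ℂ H := span ℂ ((Set.range fun k : Fin d => b (0, k)) ∪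
    (Set.range fun k : Fin d => b (-1, k))) with hKdef
  haveI : FiniteDimensional ℂ ↥Fm :=
    FiniteDimensional.span_of_finite ℂ (Set.finite_range _)
  haveI : FiniteDimensional ℂ ↥K :=
    FiniteDimensional.span_of_finite ℂ ((Set.finite_range _).union (Set.finite_range _))
  set P : H →L[ℂ] H := F.subtypeL ∘L orthogonalProjection F with hPdef
  set Pm : H →L[ℂ] H := Fm.subtypeL ∘L orthogonalProjection Fm with hPmdef
  set V : H →L[ℂ] H := K.subtypeL ∘L orthogonalProjection K with hVdef
  have hP_sa : ∀ x y, ⟪P x, y⟫ = ⟪x, P y⟫ := fun x y =>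
    Submodule.inner_starProjection_left_eq_right F x y
  have hPm_sa : ∀ x y, ⟪Pm x, y⟫ = ⟪x, Pm y⟫ := fun x y =>
    Submodule.inner_starProjection_left_eq_right Fm x y
  have hV_sa : ∀ x y, ⟪V x, y⟫ = ⟪x, V y⟫ := fun x y =>
    Submodule.inner_starProjection_left_eq_right K x y
  have hPF : ∀ y ∈ F, P y = y := fun y hy => (Submodule.starProjection_eq_self_iff (K := F)).mpr hy
  have hVK : ∀ y ∈ K, V y = y := fun y hy => (Submodule.starProjection_eq_self_iff (K := K)).mpr hy
  have hPmFm : ∀ y ∈ Fm, Pm y = y := fun y hy => (Submodule.starProjection_eq_self_iff (K := Fm)).mpr hy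
  have hPmem : ∀ x, P x ∈ F := fun x => (orthogonalProjection F x).2
  have hPmmem : ∀ x, Pm x ∈ Fm := fun x => (orthogonalProjection Fm x).2
  have hVmem : ∀ x, V x ∈ K := fun x => (orthogonalProjection K x).2
  have hFK : F ≤ K := by rw [hF, hKdef]; exact span_mono Set.subset_union_left
  have hFmK : Fm ≤ K := by rw [hFmdef, hKdef]; exact span_mono Set.subset_union_right
  -- orthogonality of basis vectors to spans
  have hborth : ∀ (n : ℤ) (i : ℤ × Fin d), i.1 ≠ n →
      b i ∈ (span ℂ (Set.range fun k : Fin d => b (n, k)))ᗮ := by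
    intro n i hi
    apply mem_orthogonal_span
    rintro u ⟨k, rfl⟩
    rw [hbij]
    have : (n, k) ≠ i := fun h => hi (by rw [← h])
    simp [this]
  have hPb : ∀ i : ℤ × Fin d, i.1 ≠ 0 → P (b i) = 0 := by
    intro i hi
    have h := hborth 0 i hi
    rw [← hF] at h
    show (F.subtypeL (orthogonalProjection F (b i)) : H) = 0
    rw [orthogonalProjection_mem_subspace_orthogonalComplement_eq_zero h]
    rfl
  have hPmb : ∀ i : ℤ × Fin d, i.1 ≠ -1 → Pm (b i) = 0 := by
    intro i hi
    have h := hborth (-1) i hi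
    rw [← hFmdef] at h
    show (Fm.subtypeL (orthogonalProjection Fm (b i)) : H) = 0
    rw [orthogonalProjection_mem_subspace_orthogonalComplement_eq_zero h]
    rfl
  have hVb0 : ∀ i : ℤ × Fin d, i.1 ≠ 0 → i.1 ≠ -1 → V (b i) = 0 := by
    intro i h0 h1
    have h : b i ∈ Kᗮ := by
      rw [hKdef]
      apply mem_orthogonal_span
      rintro u (⟨k, rfl⟩ | ⟨k, rfl⟩)
      · rw [hbij]
        have : (((0:ℤ), k) : ℤ × Fin d) ≠ i := fun h => h0 (by rw [← h])
        simp [this]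
      · rw [hbij]
        have : (((-1:ℤ), k) : ℤ × Fin d) ≠ i := fun h => h1 (by rw [← h])
        simp [this]
    show (K.subtypeL (orthogonalProjection K (b i)) : H) = 0
    rw [orthogonalProjection_mem_subspace_orthogonalComplement_eq_zero h]
    rfl
  have hVb : ∀ i : ℤ × Fin d, (i.1 = 0 ∨ i.1 = -1) → V (b i) = b i := by
    intro i hi
    apply hVK
    rcases hi with h | h
    · exact hFK (by rw [hF]; exact subset_span ⟨i.2, by rw [← h]⟩)
    · exact hFmK (by rw [hFmdef]; exact subset_span ⟨i.2, by rw [← h]⟩)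
  -- parameters
  set N : ℝ := 1 + ∑ y ∈ J, ‖y‖ with hNdef
  have hN1 : 1 ≤ N := le_add_of_nonneg_right (Finset.sum_nonneg fun y _ => norm_nonneg y)
  have hN0 : 0 < N := lt_of_lt_of_le one_pos hN1
  have hyN : ∀ y ∈ J, ‖y‖ ≤ N - 1 := by
    intro y hy
    have := Finset.single_le_sum (f := fun y : H => ‖y‖) (fun i _ => norm_nonneg i) hy
    simp only [hNdef]
    linarith
  set δ : ℝ := min 1 (ε / (2 * M * N)) with hδdef
  have hδ0 : 0 < δ := lt_min one_pos (div_pos hε (by positivity))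
  have hδ1 : δ ≤ 1 := min_le_left _ _
  have hδε : δ * (M * N) ≤ ε / 2 := by
    have h1 : δ ≤ ε / (2 * M * N) := min_le_right _ _
    have h2 : 0 < M * N := by positivity
    have h3 : δ * (M * N) ≤ ε / (2 * M * N) * (M * N) :=
      mul_le_mul_of_nonneg_right h1 (le_of_lt h2)
    have hMne := hM0.ne'
    have hNne := hN0.ne'
    have h4 : ε / (2 * M * N) * (M * N) = ε / 2 := by field_simp
    linarith
  set ε' : ℝ := δ * M / 2 with hε'def
  have hε'0 : 0 < ε' := by positivity
  -- the operator
  set S : H →L[ℂ] H := (M:ℂ) • UL + ((ε' - M : ℝ) : ℂ) • (UL ∘L V) +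
    ((1 - δ : ℝ) : ℂ) • (P ∘L (T ∘L P)) with hSdef
  set Sa : H →L[ℂ] H := (M:ℂ) • ULs + ((ε' - M : ℝ) : ℂ) • (V ∘L ULs) +
    ((1 - δ : ℝ) : ℂ) • (P ∘L ((adjoint T) ∘L P)) with hSadef
  have hSapp : ∀ x, S x = (M:ℂ) • UL x + ((ε' - M : ℝ) : ℂ) • UL (V x) +
      ((1 - δ : ℝ) : ℂ) • P (T (P x)) := by
    intro x; rw [hSdef]; rfl
  have hSaapp : ∀ x, Sa x = (M:ℂ) • ULs x + ((ε' - M : ℝ) : ℂ) • V (ULs x) +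
      ((1 - δ : ℝ) : ℂ) • P ((adjoint T) (P x)) := by
    intro x; rw [hSadef]; rfl
  -- the adjoint identity
  have hadj : adjoint S = Sa := by
    symm
    apply (ContinuousLinearMap.eq_adjoint_iff Sa S).mpr
    intro x y
    have h1 : ∀ x y, ⟪V (ULs x), y⟫ = ⟪x, UL (V y)⟫ := by
      intro x y; rw [hV_sa, hUUs]
    have h3 : ∀ x y, ⟪P ((adjoint T) (P x)), y⟫ = ⟪x, P (T (P y))⟫ := by
      intro x y
      rw [hP_sa, adjoint_inner_left, ← hP_sa]
    rw [hSaapp, hSapp]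
    rw [inner_add_left, inner_add_left, inner_add_right, inner_add_right]
    rw [inner_smul_left, inner_smul_left, inner_smul_left,
      inner_smul_right, inner_smul_right, inner_smul_right]
    rw [hUUs, h1, h3, Complex.conj_ofReal, Complex.conj_ofReal, Complex.conj_ofReal]
  -- norm bound
  have hPcontr : ∀ z, ‖P z‖ ≤ ‖z‖ := by
    intro z
    show ‖(orthogonalProjection F z : H)‖ ≤ ‖z‖
    rw [← Submodule.coe_norm]
    calc ‖orthogonalProjection F z‖ ≤ ‖orthogonalProjection F‖ * ‖z‖ :=
          (orthogonalProjection F).le_opNorm z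
      _ ≤ 1 * ‖z‖ := mul_le_mul_of_nonneg_right (orthogonalProjection_norm_le F) (norm_nonneg z)
      _ = ‖z‖ := one_mul _
  have hcast1 : ((ε' - M : ℝ) : ℂ) = ((ε' : ℝ) : ℂ) - ((M : ℝ) : ℂ) := by push_cast; ring
  have hnM : ‖((M : ℝ) : ℂ)‖ = M := by rw [Complex.norm_real]; exact abs_of_pos hM0
  have hnε'' : ‖((ε' : ℝ) : ℂ)‖ = ε' := by rw [Complex.norm_real]; exact abs_of_pos hε'0
  have hF1orthF : F1 ≤ Fᗮ := by
    rw [hF1def]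
    apply span_le.mpr
    rintro u ⟨k, rfl⟩
    rw [hF]
    exact hborth 0 (1, k) (by norm_num)
  have hFmorthF : Fm ≤ Fᗮ := by
    rw [hFmdef]
    apply span_le.mpr
    rintro u ⟨k, rfl⟩
    rw [hF]
    exact hborth 0 (-1, k) (by norm_num)
  have hULFmF : ∀ u ∈ Fm, UL u ∈ F := by
    intro u hu
    rw [hFmdef] at hu
    induction hu using Submodule.span_induction with
    | mem u hu =>
      obtain ⟨k, rfl⟩ := hu
      rw [hUb]
      rw [hF]
      exact subset_span ⟨k, by norm_num⟩
    | zero => simp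
    | add u v _ _ hu hv => rw [map_add]; exact F.add_mem hu hv
    | smul a u _ hu => rw [map_smul]; exact F.smul_mem a hu
  have hULFF1 : ∀ u ∈ F, UL u ∈ F1 := by
    intro u hu
    rw [hF] at hu
    induction hu using Submodule.span_induction with
    | mem u hu =>
      obtain ⟨k, rfl⟩ := hu
      rw [hUb]
      rw [hF1def]
      exact subset_span ⟨k, by norm_num⟩
    | zero => simp
    | add u v _ _ hu hv => rw [map_add]; exact F1.add_mem hu hv
    | smul a u _ hu => rw [map_smul]; exact F1.smul_mem a hu
  have hVPP : ∀ x, V x = P x + Pm x := by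
    intro x
    have hmem : P x + Pm x ∈ K := K.add_mem (hFK (hPmem x)) (hFmK (hPmmem x))
    have hperp : x - (P x + Pm x) ∈ Kᗮ := by
      rw [hKdef]
      apply mem_orthogonal_span
      rintro u (⟨k, rfl⟩ | ⟨k, rfl⟩)
      · rw [inner_sub_right, inner_add_right]
        have h1 : ⟪b (0,k), P x⟫ = ⟪b (0,k), x⟫ := by
          rw [← hP_sa, hPF _ (by rw [hF]; exact subset_span ⟨k, rfl⟩)]
        have h2 : ⟪b (0,k), Pm x⟫ = 0 := by
          rw [← hPm_sa, hPmb (0,k) (by norm_num), inner_zero_left]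
        rw [h1, h2]
        ring
      · rw [inner_sub_right, inner_add_right]
        have h1 : ⟪b (-1,k), P x⟫ = 0 := by
          rw [← hP_sa, hPb (-1,k) (by norm_num), inner_zero_left]
        have h2 : ⟪b (-1,k), Pm x⟫ = ⟪b (-1,k), x⟫ := by
          rw [← hPm_sa, hPmFm _ (by rw [hFmdef]; exact subset_span ⟨k, rfl⟩)]
        rw [h1, h2]
        ring
    exact Submodule.eq_starProjection_of_mem_orthogonal hmem hperp
  have hnorm : ‖S‖ ≤ M := by
    refine ContinuousLinearMap.opNorm_le_bound S hM0.le ?_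
    intro x
    set α : H := ((ε' : ℝ) : ℂ) • UL (Pm x) + ((1 - δ : ℝ) : ℂ) • P (T (P x)) with hαdef
    set β : H := ((ε' : ℝ) : ℂ) • UL (P x) with hβdef
    set wv : H := ((M : ℝ) : ℂ) • UL (x - V x) with hwdef
    have hαF : α ∈ F := F.add_mem (F.smul_mem _ (hULFmF _ (hPmmem x))) (F.smul_mem _ (hPmem _))
    have hβF1 : β ∈ F1 := F1.smul_mem _ (hULFF1 _ (hPmem x))
    have hxV : x - V x ∈ Kᗮ := Submodule.sub_starProjection_mem_orthogonal (K := K) x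
    have hUxVF : UL (x - V x) ∈ Fᗮ := by
      rw [hF]
      apply mem_orthogonal_span
      rintro u ⟨k, rfl⟩
      rw [hUinner]
      have hbK : b ((0:ℤ) - 1, k) ∈ K :=
        hFmK (by rw [hFmdef]; exact subset_span ⟨k, by norm_num⟩)
      exact (Submodule.mem_orthogonal K _).mp hxV _ hbK
    have hdec : S x = (α + β) + wv := by
      rw [hSapp, hαdef, hβdef, hwdef, hcast1]
      have hUV : UL (V x) = UL (P x) + UL (Pm x) := by rw [hVPP, map_add]
      have hUxv : UL (x - V x) = UL x - UL (V x) := map_sub _ _ _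
      rw [hUxv, hUV]
      module
    have hab : ⟪α, β⟫ = 0 := (Submodule.mem_orthogonal F β).mp (hF1orthF hβF1) α hαF
    have habw : ⟪α + β, wv⟫ = 0 := by
      rw [inner_add_left, hwdef, inner_smul_right, inner_smul_right]
      have h1 : ⟪α, UL (x - V x)⟫ = 0 :=
        (Submodule.mem_orthogonal F _).mp hUxVF α hαF
      have h2 : ⟪β, UL (x - V x)⟫ = 0 := by
        rw [hβdef, inner_smul_left]
        have : ⟪UL (P x), UL (x - V x)⟫ = ⟪P x, x - V x⟫ := by
          rw [hULa, hULa]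
          exact U.inner_map_map _ _
        rw [this, (Submodule.mem_orthogonal K _).mp hxV _ (hFK (hPmem x)), mul_zero]
      rw [h1, h2]
      ring
    have hVxV : ⟪V x, x - V x⟫ = 0 :=
      (Submodule.mem_orthogonal K _).mp hxV _ (hVmem x)
    have hPPm : ⟪P x, Pm x⟫ = 0 :=
      (Submodule.mem_orthogonal F _).mp (hFmorthF (hPmmem x)) _ (hPmem x)
    -- norms
    set a : ℝ := ‖Pm x‖ with hadef
    set t : ℝ := ‖P x‖ with htdef
    set r : ℝ := ‖x - V x‖ with hrdef
    have ha0 : 0 ≤ a := norm_nonneg _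
    have ht0 : 0 ≤ t := norm_nonneg _
    have hr0 : 0 ≤ r := norm_nonneg _
    have hSx2 : ‖S x‖ ^ 2 = ‖α‖ ^ 2 + ‖β‖ ^ 2 + ‖wv‖ ^ 2 := by
      rw [hdec, norm_add_sq_of_inner_eq_zero habw, norm_add_sq_of_inner_eq_zero hab]
    have hx2 : ‖x‖ ^ 2 = (t ^ 2 + a ^ 2) + r ^ 2 := by
      have h1 : ‖x‖ ^ 2 = ‖V x‖ ^ 2 + r ^ 2 := by
        conv_lhs => rw [show x = V x + (x - V x) by abel]
        rw [norm_add_sq_of_inner_eq_zero hVxV]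
      have h2 : ‖V x‖ ^ 2 = t ^ 2 + a ^ 2 := by
        rw [hVPP, norm_add_sq_of_inner_eq_zero hPPm]
      rw [h1, h2]
    have hwvn : ‖wv‖ = M * r := by
      rw [hwdef, norm_smul, hnM]
      congr 1
      exact U.toLinearIsometry.norm_map _
    have hβn : ‖β‖ = ε' * t := by
      rw [hβdef, norm_smul, hnε'']
      congr 1
      exact U.toLinearIsometry.norm_map _
    have hαn : ‖α‖ ≤ ε' * a + (1 - δ) * (M * t) := by
      rw [hαdef]
      refine le_trans (norm_add_le _ _) ?_
      rw [norm_smul, norm_smul, hnε'']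
      have h1 : ‖UL (Pm x)‖ = a := U.toLinearIsometry.norm_map _
      have h2 : ‖P (T (P x))‖ ≤ M * t := by
        refine le_trans (hPcontr _) ?_
        refine le_trans (T.le_opNorm _) ?_
        exact mul_le_mul_of_nonneg_right hT (norm_nonneg _)
      have h3 : ‖((1 - δ : ℝ) : ℂ)‖ = 1 - δ := by
        rw [Complex.norm_real]
        exact abs_of_nonneg (by linarith)
      rw [h1, h3]
      have := mul_le_mul_of_nonneg_left h2 (show (0:ℝ) ≤ 1 - δ by linarith)
      linarith
    have hα2 : ‖α‖ ^ 2 ≤ (ε' * a + (1 - δ) * (M * t)) ^ 2 := by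
      have h0 : (0:ℝ) ≤ ‖α‖ := norm_nonneg _
      have h1 : 0 ≤ ε' * a + (1 - δ) * (M * t) := le_trans h0 hαn
      exact mul_self_le_mul_self h0 hαn |>.trans_eq (by ring) |>.trans_eq' (by ring)
    have key : ‖S x‖ ^ 2 ≤ (M * ‖x‖) ^ 2 := by
      rw [hSx2, hβn, hwvn]
      have hk := key_ineq (a := a) (t := t) hM0 hδ0 hδ1
      rw [← hε'def] at hk
      have e1 : (M * ‖x‖)^2 = M^2*(a^2+t^2) + M^2 * r^2 := by rw [mul_pow, hx2]; ring
      have e2 : (M * r)^2 = M^2 * r^2 := by ring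
      rw [e1, e2]
      linarith
    exact sq_le_sq_of_nonneg (norm_nonneg _) (mul_nonneg hM0.le (norm_nonneg x)) key
  -- vanishing of all coordinates implies zero
  have hxzero : ∀ x : H, (∀ i : ℤ × Fin d, ⟪b i, x⟫ = 0) → x = 0 := by
    intro x hx
    have h : b.repr x = 0 := by
      apply lp.ext
      funext i
      have h0 : (0 : lp (fun _ : ℤ × Fin d => ℂ) 2) i = 0 := rfl
      have h1 := b.repr_apply_apply x i
      rw [h0, h1]
      exact hx i
    have h2 := congrArg b.repr.symm h
    rwa [b.repr.symm_apply_apply, map_zero] at h2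
  -- no eigenvalues
  have heig : ∀ (lam : ℂ) (x : H), S x = lam • x → x = 0 := by
    intro lam x hx
    by_contra hx0
    set c : ℤ × Fin d → ℂ := fun i => ⟪b i, x⟫ with hcdef
    have hε'C : ((ε' : ℝ) : ℂ) ≠ 0 := by
      simpa using Complex.ofReal_ne_zero.mpr hε'0.ne'
    have hMC : ((M : ℝ) : ℂ) ≠ 0 := by
      simpa using Complex.ofReal_ne_zero.mpr hM0.ne'
    have hSc : ∀ i : ℤ × Fin d, ⟪b i, S x⟫ =
        ((M : ℝ) : ℂ) * ⟪b (i.1 - 1, i.2), x⟫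
        + ((ε' - M : ℝ) : ℂ) * ⟪b (i.1 - 1, i.2), V x⟫
        + ((1 - δ : ℝ) : ℂ) * ⟪b i, P (T (P x))⟫ := by
      intro i
      rw [hSapp, inner_add_right, inner_add_right, inner_smul_right, inner_smul_right,
        inner_smul_right, hUinner, hUinner]
    have hlc : ∀ i : ℤ × Fin d, lam * c i =
        ((M : ℝ) : ℂ) * c (i.1 - 1, i.2)
        + ((ε' - M : ℝ) : ℂ) * ⟪b (i.1 - 1, i.2), V x⟫
        + ((1 - δ : ℝ) : ℂ) * ⟪b i, P (T (P x))⟫ := by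
      intro i
      calc lam * c i = ⟪b i, S x⟫ := by rw [hx, inner_smul_right]
        _ = _ := hSc i
    have eqA : ∀ (m : ℤ) (j : Fin d), m ≠ 0 → m ≠ 1 →
        lam * c (m, j) = ((M : ℝ) : ℂ) * c (m - 1, j) := by
      intro m j hm0 hm1
      have h := hlc (m, j)
      have h1 : ⟪b ((m, j).1 - 1, (m, j).2), V x⟫ = 0 := by
        rw [← hV_sa, hVb0 _ (by simp; omega) (by simp; omega), inner_zero_left]
      have h2 : ⟪b (m, j), P (T (P x))⟫ = 0 := by
        rw [← hP_sa, hPb _ (by simpa using hm0), inner_zero_left]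
      rw [h1, h2] at h
      simpa using h
    have eqB : ∀ j : Fin d, lam * c (1, j) = ((ε' : ℝ) : ℂ) * c (0, j) := by
      intro j
      have h := hlc (1, j)
      have e : (((1:ℤ), j).1 - 1, ((1:ℤ), j).2) = (((0:ℤ)), j) := by norm_num
      rw [e] at h
      have h1 : ⟪b ((0:ℤ), j), V x⟫ = c (0, j) := by
        rw [← hV_sa, hVb _ (Or.inl rfl)]
      have h2 : ⟪b ((1:ℤ), j), P (T (P x))⟫ = 0 := by
        rw [← hP_sa, hPb _ (by norm_num), inner_zero_left]
      rw [h1, h2] at h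
      rw [h]
      push_cast
      ring
    have eqC : ∀ j : Fin d, lam * c (0, j) =
        ((ε' : ℝ) : ℂ) * c (-1, j) + ((1 - δ : ℝ) : ℂ) * ⟪b ((0:ℤ), j), T (P x)⟫ := by
      intro j
      have h := hlc (0, j)
      have e : (((0:ℤ), j).1 - 1, ((0:ℤ), j).2) = (((-1:ℤ)), j) := by norm_num
      rw [e] at h
      have h1 : ⟪b ((-1:ℤ), j), V x⟫ = c (-1, j) := by
        rw [← hV_sa, hVb _ (Or.inr rfl)]
      have h2 : ⟪b ((0:ℤ), j), P (T (P x))⟫ = ⟪b ((0:ℤ), j), T (P x)⟫ := by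
        rw [← hP_sa, hPF _ (by rw [hF]; exact subset_span ⟨j, rfl⟩)]
      rw [h1, h2] at h
      rw [h]
      push_cast
      ring
    -- P x vanishes as soon as the 0-level coordinates vanish
    have hPx0 : (∀ j, c (0, j) = 0) → P x = 0 := by
      intro hc0
      have hall : ∀ u ∈ F, ⟪u, P x⟫ = 0 := by
        intro u hu
        rw [hF] at hu
        induction hu using Submodule.span_induction with
        | mem u hu =>
          obtain ⟨k, rfl⟩ := hu
          rw [← hP_sa, hPF _ (by rw [hF]; exact subset_span ⟨k, rfl⟩)]
          exact hc0 k
        | zero => simp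
        | add u v _ _ hu hv => rw [inner_add_left, hu, hv, add_zero]
        | smul a u _ hu => rw [inner_smul_left, hu, mul_zero]
      exact inner_self_eq_zero.mp (hall _ (hPmem x))
    rcases eq_or_ne lam 0 with rfl | hlam
    · -- λ = 0
      have hc0 : ∀ j, c (0, j) = 0 := by
        intro j
        have h := (eqB j).symm
        rw [zero_mul] at h
        exact (mul_eq_zero.mp h).resolve_left hε'C
      have hPx : P x = 0 := hPx0 hc0
      have hcm1 : ∀ j, c (-1, j) = 0 := by
        intro j
        have h := (eqC j).symm
        rw [zero_mul, hPx, map_zero, inner_zero_right, mul_zero, add_zero] at h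
        exact (mul_eq_zero.mp h).resolve_left hε'C
      have hcother : ∀ (m : ℤ) (j : Fin d), m ≠ -1 → m ≠ 0 → c (m, j) = 0 := by
        intro m j hm1 hm0
        have h := (eqA (m + 1) j (by omega) (by omega)).symm
        rw [zero_mul] at h
        have h2 := (mul_eq_zero.mp h).resolve_left hMC
        have e : ((m:ℤ) + 1 - 1, j) = (m, j) := by norm_num
        rwa [e] at h2
      apply hx0
      apply hxzero
      intro i
      rcases i with ⟨m, j⟩
      rcases eq_or_ne m 0 with rfl | hm0
      · exact hc0 j
      rcases eq_or_ne m (-1) with rfl | hm1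
      · exact hcm1 j
      · exact hcother m j hm1 hm0
    · -- λ ≠ 0
      have hxn : (0:ℝ) < ‖x‖ := norm_pos_iff.mpr hx0
      have hlamM : ‖lam‖ ≤ M := by
        have h1 : ‖S x‖ ≤ M * ‖x‖ := by
          refine le_trans (S.le_opNorm x) ?_
          exact mul_le_mul_of_nonneg_right hnorm (norm_nonneg x)
        rw [hx, norm_smul] at h1
        exact le_of_mul_le_mul_right (by linarith) hxn
      have hlamn : (0:ℝ) < ‖lam‖ := norm_pos_iff.mpr hlam
      -- the coordinate at (1, j) vanishes
      have hc1 : ∀ j, c (1, j) = 0 := by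
        intro j
        by_contra hc
        have hpos : (0:ℝ) < ‖c (1, j)‖ := norm_pos_iff.mpr hc
        have hstep : ∀ n : ℕ, ‖c (1, j)‖ ≤ ‖c (1 + (n:ℤ), j)‖ := by
          intro n
          induction n with
          | zero => simp
          | succ n ih =>
            have heq := eqA (1 + (n:ℤ) + 1) j (by omega) (by omega)
            have e : ((1:ℤ) + (n:ℤ) + 1 - 1, j) = ((1:ℤ) + (n:ℤ), j) := by norm_num
            rw [e] at heq
            have hnorms : ‖lam‖ * ‖c (1 + (n:ℤ) + 1, j)‖ = M * ‖c (1 + (n:ℤ), j)‖ := by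
              have hMn : ‖((M : ℝ) : ℂ)‖ = M := by
                rw [Complex.norm_real]; exact abs_of_pos hM0
              have := congrArg norm heq
              rwa [norm_mul, norm_mul, hMn] at this
            have hge : ‖lam‖ * ‖c (1 + (n:ℤ), j)‖ ≤ ‖lam‖ * ‖c (1 + (n:ℤ) + 1, j)‖ := by
              rw [hnorms]
              exact mul_le_mul_of_nonneg_right hlamM (norm_nonneg _)
            have h3 := le_of_mul_le_mul_left hge hlamn
            have e2 : ((n:ℕ)+1 : ℕ) = (n+1 : ℕ) := rfl
            calc ‖c (1, j)‖ ≤ ‖c (1 + (n:ℤ), j)‖ := ih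
              _ ≤ ‖c (1 + (n:ℤ) + 1, j)‖ := h3
              _ = ‖c (1 + ((n+1 : ℕ) : ℤ), j)‖ := by push_cast; ring_nf
        have hsum : Summable (fun i : ℤ × Fin d => ‖b.repr x i‖ ^ (2:ℝ≥0∞).toReal) :=
          (lp.memℓp (b.repr x)).summable (by norm_num)
        have htend0 : Tendsto (fun i : ℤ × Fin d => ‖b.repr x i‖ ^ (2:ℝ≥0∞).toReal)
            cofinite (𝓝 0) := hsum.tendsto_cofinite_zero
        have hinj : Function.Injective (fun n : ℕ => ((1 + (n:ℤ), j) : ℤ × Fin d)) := by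
          intro a b h
          have := congrArg Prod.fst h
          simpa using this
        have htend : Tendsto (fun n : ℕ => ‖b.repr x ((1 + (n:ℤ), j))‖ ^ (2:ℝ≥0∞).toReal)
            atTop (𝓝 0) := by
          rw [← Nat.cofinite_eq_atTop]
          exact htend0.comp hinj.tendsto_cofinite
        have hposp : (0:ℝ) < ‖c (1, j)‖ ^ (2:ℝ≥0∞).toReal := by
          positivity
        have hev := htend.eventually_lt_const hposp
        obtain ⟨n, hn⟩ := hev.exists
        have hrepr : ‖b.repr x ((1 + (n:ℤ), j))‖ = ‖c (1 + (n:ℤ), j)‖ := by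
          rw [b.repr_apply_apply]
        rw [hrepr] at hn
        have hmono := Real.rpow_le_rpow (norm_nonneg _) (hstep n)
          (by norm_num : (0:ℝ) ≤ (2:ℝ≥0∞).toReal)
        exact absurd hn (not_lt.mpr hmono)
      have hc0 : ∀ j, c (0, j) = 0 := by
        intro j
        have h := (eqB j).symm
        rw [hc1 j, mul_zero] at h
        exact (mul_eq_zero.mp h).resolve_left hε'C
      have hPx : P x = 0 := hPx0 hc0
      have hcm1 : ∀ j, c (-1, j) = 0 := by
        intro j
        have h := (eqC j).symm
        rw [hc0 j, mul_zero, hPx, map_zero, inner_zero_right, mul_zero, add_zero] at h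
        exact (mul_eq_zero.mp h).resolve_left hε'C
      have hup : ∀ (n : ℕ) (j : Fin d), c (1 + (n:ℤ), j) = 0 := by
        intro n
        induction n with
        | zero => intro j; simpa using hc1 j
        | succ n ih =>
          intro j
          have heq := eqA (1 + (n:ℤ) + 1) j (by omega) (by omega)
          have e : ((1:ℤ) + (n:ℤ) + 1 - 1, j) = ((1:ℤ) + (n:ℤ), j) := by norm_num
          rw [e, ih j, mul_zero] at heq
          have h2 := (mul_eq_zero.mp heq).resolve_left hlam
          have e2 : ((1:ℤ) + ((n:ℕ)+1 : ℕ), j) = ((1:ℤ) + (n:ℤ) + 1, j) := by push_cast; ring_nf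
          rw [e2]
          exact h2
      have hdown : ∀ (n : ℕ) (j : Fin d), c (-1 - (n:ℤ), j) = 0 := by
        intro n
        induction n with
        | zero => intro j; simpa using hcm1 j
        | succ n ih =>
          intro j
          have heq := eqA (-1 - (n:ℤ)) j (by omega) (by omega)
          rw [ih j, mul_zero] at heq
          have h2 := (mul_eq_zero.mp heq.symm).resolve_left hMC
          have e2 : ((-1:ℤ) - ((n:ℕ)+1 : ℕ), j) = ((-1:ℤ) - (n:ℤ) - 1, j) := by push_cast; ring_nf
          rw [e2]
          exact h2
      apply hx0
      apply hxzero
      intro i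
      rcases i with ⟨m, j⟩
      rcases eq_or_ne m 0 with rfl | hm0
      · exact hc0 j
      rcases lt_or_gt_of_ne hm0 with hml | hmg
      · obtain ⟨n, rfl⟩ : ∃ n : ℕ, m = -1 - (n:ℤ) := ⟨(-1 - m).toNat, by omega⟩
        exact hdown n j
      · obtain ⟨n, rfl⟩ : ∃ n : ℕ, m = 1 + (n:ℤ) := ⟨(m - 1).toNat, by omega⟩
        exact hup n j
  -- approximation
  have hcast1 : ((ε' - M : ℝ) : ℂ) = (ε' : ℂ) - (M : ℂ) := by push_cast; ring
  have hcast2 : ((1 - δ : ℝ) : ℂ) = 1 - ((δ:ℝ) : ℂ) := by push_cast; ring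
  have hULsF : ∀ u ∈ F, ULs u ∈ K := by
    intro u hu
    rw [hF] at hu
    induction hu using Submodule.span_induction with
    | mem u hu =>
      obtain ⟨k, rfl⟩ := hu
      rw [hUsb]
      exact hFmK (subset_span ⟨k, by norm_num⟩)
    | zero => simp
    | add u v _ _ hu hv => rw [map_add]; exact K.add_mem hu hv
    | smul a u _ hu => rw [map_smul]; exact K.smul_mem a hu
  have hadjnorm : ‖adjoint T‖ = ‖T‖ := LinearIsometryEquiv.norm_map ContinuousLinearMap.adjoint T
  have happrox : ∀ y ∈ J, ‖S y - T y‖ < ε ∧ ‖(adjoint S) y - (adjoint T) y‖ < ε := by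
    intro y hy
    have hyF : y ∈ F := subset_span (Or.inl (Or.inl (Or.inl hy)))
    have hTyF : T y ∈ F := subset_span (Or.inl (Or.inl (Or.inr ⟨y, hy, rfl⟩)))
    have hTayF : (adjoint T) y ∈ F := subset_span (Or.inl (Or.inr ⟨y, hy, rfl⟩))
    have hVy : V y = y := hVK y (hFK hyF)
    have hPy : P y = y := hPF y hyF
    have hyN' : ‖y‖ ≤ N - 1 := hyN y hy
    have hnε' : ‖((ε' : ℝ) : ℂ)‖ = ε' := by
      rw [Complex.norm_real]; exact abs_of_pos hε'0
    have hnδ : ‖((δ : ℝ) : ℂ)‖ = δ := by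
      rw [Complex.norm_real]; exact abs_of_pos hδ0
    constructor
    · have hdiff : S y - T y = ((ε' : ℝ) : ℂ) • UL y - ((δ : ℝ) : ℂ) • T y := by
        rw [hSapp, hVy, hPy, hPF _ hTyF, hcast1, hcast2]
        module
      have hULy : ‖UL y‖ = ‖y‖ := U.toLinearIsometry.norm_map y
      have hTy : ‖T y‖ ≤ M * ‖y‖ :=
        le_trans (T.le_opNorm y) (mul_le_mul_of_nonneg_right hT (norm_nonneg y))
      have hbound : ‖S y - T y‖ ≤ ε' * ‖y‖ + δ * (M * ‖y‖) := by
        rw [hdiff]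
        refine le_trans (norm_sub_le _ _) ?_
        rw [norm_smul, norm_smul, hnε', hnδ, hULy]
        have := mul_le_mul_of_nonneg_left hTy hδ0.le
        linarith
      have hy0 : (0:ℝ) ≤ ‖y‖ := norm_nonneg y
      calc ‖S y - T y‖ ≤ ε' * ‖y‖ + δ * (M * ‖y‖) := hbound
        _ ≤ ε' * N + δ * (M * N) := by
            have h1 : ‖y‖ ≤ N := by linarith
            have h2 : ε' * ‖y‖ ≤ ε' * N := mul_le_mul_of_nonneg_left h1 hε'0.le
            have h3 : M * ‖y‖ ≤ M * N := mul_le_mul_of_nonneg_left h1 hM0.le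
            have h4 : δ * (M * ‖y‖) ≤ δ * (M * N) := mul_le_mul_of_nonneg_left h3 hδ0.le
            linarith
        _ ≤ (3/4) * ε := by rw [hε'def]; nlinarith
        _ < ε := by linarith
    · rw [hadj]
      have hVULs : V (ULs y) = ULs y := hVK _ (hULsF y hyF)
      have hdiff : Sa y - (adjoint T) y =
          ((ε' : ℝ) : ℂ) • ULs y - ((δ : ℝ) : ℂ) • (adjoint T) y := by
        rw [hSaapp, hVULs, hPy, hPF _ hTayF, hcast1, hcast2]
        module
      have hULy : ‖ULs y‖ = ‖y‖ := (U.symm).toLinearIsometry.norm_map y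
      have hTy : ‖(adjoint T) y‖ ≤ M * ‖y‖ := by
        refine le_trans ((adjoint T).le_opNorm y) ?_
        rw [hadjnorm]
        exact mul_le_mul_of_nonneg_right hT (norm_nonneg y)
      have hbound : ‖Sa y - (adjoint T) y‖ ≤ ε' * ‖y‖ + δ * (M * ‖y‖) := by
        rw [hdiff]
        refine le_trans (norm_sub_le _ _) ?_
        rw [norm_smul, norm_smul, hnε', hnδ, hULy]
        have := mul_le_mul_of_nonneg_left hTy hδ0.le
        linarith
      calc ‖Sa y - (adjoint T) y‖ ≤ ε' * ‖y‖ + δ * (M * ‖y‖) := hbound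
        _ ≤ ε' * N + δ * (M * N) := by
            have h1 : ‖y‖ ≤ N := by linarith
            have h2 : ε' * ‖y‖ ≤ ε' * N := mul_le_mul_of_nonneg_left h1 hε'0.le
            have h3 : M * ‖y‖ ≤ M * N := mul_le_mul_of_nonneg_left h1 hM0.le
            have h4 : δ * (M * ‖y‖) ≤ δ * (M * N) := mul_le_mul_of_nonneg_left h3 hδ0.le
            linarith
        _ ≤ (3/4) * ε := by rw [hε'def]; nlinarith
        _ < ε := by linarith
  exact ⟨S, hnorm, heig, happrox⟩

end SotStar

/-- The strong-star operator topology (SOT*) on the closed ball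
`B_M(H) = {T : ‖T‖ ≤ M}`: the topology induced by the map
`T ↦ ((Tx)_{x ∈ H}, (T*x)_{x ∈ H})` into `(H → H) × (H → H)` with the product topology. -/
noncomputable def sotStar {H : Type*} [NormedAddCommGroup H] [InnerProductSpace ℂ H]
    [CompleteSpace H] (M : ℝ) :
    TopologicalSpace {T : H →L[ℂ] H // ‖T‖ ≤ M} :=
  TopologicalSpace.induced
    (fun T => ((fun x => T.1 x, fun x => (ContinuousLinearMap.adjoint T.1) x) :
      (H → H) × (H → H)))
    inferInstance

namespace SotStar

variable (H : Type*) [NormedAddCommGroup H] [InnerProductSpace ℂ H] [CompleteSpace H] (M : ℝ)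

/-- Type synonym for the closed ball of radius `M`, carrying the SOT* topology. -/
def Om := {T : H →L[ℂ] H // ‖T‖ ≤ M}

def piMap : Om H M → (H → H) × (H → H) :=
  fun T => (fun x => T.1 x, fun x => (ContinuousLinearMap.adjoint T.1) x)

noncomputable instance : TopologicalSpace (Om H M) :=
  TopologicalSpace.induced (piMap H M) inferInstance

variable {H M}

open ContinuousLinearMap in
lemma continuous_adj_apply (z : H) :
    Continuous (fun S : Om H M => (adjoint S.1) z) := by
  have h1 : Continuous (piMap H M) := continuous_induced_dom
  exact (continuous_apply z).comp (continuous_snd.comp h1)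

open ContinuousLinearMap in
theorem dense_good [TopologicalSpace.SeparableSpace H] (hdim : ¬ FiniteDimensional ℂ H)
    (hM : 1 < M) :
    Dense {T : Om H M | ∀ (c : ℂ) (x : H), T.1 x = c • x → x = 0} := by
  classical
  rw [dense_iff_inter_open]
  intro Uo hUo hUne
  obtain ⟨T, hTU⟩ := hUne
  obtain ⟨O, hO, rfl⟩ := isOpen_induced_iff.mp hUo
  have hnhds : O ∈ 𝓝 (piMap H M T) := hO.mem_nhds hTU
  rw [nhds_prod_eq, Filter.mem_prod_iff] at hnhds
  obtain ⟨O₁, hO₁, O₂, hO₂, hsub⟩ := hnhds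
  rw [nhds_pi, Filter.mem_pi'] at hO₁ hO₂
  obtain ⟨I₁, t₁, ht₁, hsub₁⟩ := hO₁
  obtain ⟨I₂, t₂, ht₂, hsub₂⟩ := hO₂
  have hr : ∀ x : H, ∃ r : ℝ, 0 < r ∧ Metric.ball (T.1 x) r ⊆ t₁ x ∧
      Metric.ball ((adjoint T.1) x) r ⊆ t₂ x := by
    intro x
    rcases Metric.mem_nhds_iff.mp (ht₁ x) with ⟨r1, hr1, hb1⟩
    rcases Metric.mem_nhds_iff.mp (ht₂ x) with ⟨r2, hr2, hb2⟩
    exact ⟨min r1 r2, lt_min hr1 hr2,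
      subset_trans (Metric.ball_subset_ball (min_le_left _ _)) hb1,
      subset_trans (Metric.ball_subset_ball (min_le_right _ _)) hb2⟩
  choose r hr0 hrb1 hrb2 using hr
  set Jf : Finset H := insert 0 (I₁ ∪ I₂) with hJf
  have hJne : Jf.Nonempty := ⟨0, Finset.mem_insert_self _ _⟩
  set ε₀ : ℝ := Jf.inf' hJne r with hε₀def
  have hε₀ : 0 < ε₀ := by
    rw [hε₀def, Finset.lt_inf'_iff]
    exact fun x _ => hr0 x
  obtain ⟨S, hSn, hSe, hSa⟩ := exists_good hdim M hM.le T.1 T.2 Jf hε₀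
  refine ⟨(⟨S, hSn⟩ : Om H M), ?_, hSe⟩
  show piMap H M ⟨S, hSn⟩ ∈ O
  apply hsub
  constructor
  · apply hsub₁
    rw [Set.mem_pi]
    intro x hx
    apply hrb1 x
    rw [Metric.mem_ball, dist_eq_norm]
    have hxJ : x ∈ Jf := Finset.mem_insert_of_mem (Finset.mem_union_left _ hx)
    calc ‖S x - T.1 x‖ < ε₀ := (hSa x hxJ).1
      _ ≤ r x := Finset.inf'_le r hxJ
  · apply hsub₂
    rw [Set.mem_pi]
    intro x hx
    apply hrb2 x
    rw [Metric.mem_ball, dist_eq_norm]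
    have hxJ : x ∈ Jf := Finset.mem_insert_of_mem (Finset.mem_union_right _ hx)
    calc ‖(adjoint S) x - (adjoint T.1) x‖ < ε₀ := (hSa x hxJ).2
      _ ≤ r x := Finset.inf'_le r hxJ

open ContinuousLinearMap in
theorem closed_Ey (hM0 : 0 < M) (y : H) :
    IsClosed {T : Om H M | ∃ lam : ℂ, ‖lam‖ ≤ M ∧ ∃ x : H, ‖x‖ ≤ 1 ∧
      1/2 ≤ (⟪y, x⟫).re ∧ T.1 x = lam • x} := by
  classical
  set Ey : Set (Om H M) := {T | ∃ lam : ℂ, ‖lam‖ ≤ M ∧ ∃ x : H, ‖x‖ ≤ 1 ∧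
      1/2 ≤ (⟪y, x⟫).re ∧ T.1 x = lam • x} with hEy
  rw [isClosed_iff_clusterPt]
  intro T hT
  haveI : (𝓝 T ⊓ 𝓟 Ey).NeBot := hT
  obtain ⟨U, hU⟩ := Filter.exists_ultrafilter_le (𝓝 T ⊓ 𝓟 Ey)
  have hUnhds : ↑U ≤ 𝓝 T := hU.trans inf_le_left
  have hUE : Ey ∈ U := (hU.trans inf_le_right) (Filter.mem_principal_self _)
  have hsel : ∀ S : Om H M, ∃ p : ℂ × H, S ∈ Ey →
      ‖p.1‖ ≤ M ∧ ‖p.2‖ ≤ 1 ∧ 1/2 ≤ (⟪y, p.2⟫).re ∧ S.1 p.2 = p.1 • p.2 := by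
    intro S
    by_cases hS : S ∈ Ey
    · obtain ⟨lam, h1, x, h2, h3, h4⟩ := hS
      exact ⟨(lam, x), fun _ => ⟨h1, h2, h3, h4⟩⟩
    · exact ⟨(0, 0), fun h => absurd h hS⟩
  choose p hp using hsel
  set Φ : Om H M → WeakDual ℂ H × ℂ := fun S =>
    ((InnerProductSpace.toDual ℂ H (p S).2).toWeakDual, (p S).1) with hΦ
  set Cset : Set (WeakDual ℂ H) :=
    (WeakDual.toStrongDual ⁻¹' Metric.closedBall 0 1) ∩ {φ | 1/2 ≤ (φ y).re} with hCset
  have hCcomp : IsCompact Cset := by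
    apply (WeakDual.isCompact_closedBall (𝕜 := ℂ) 0 1).inter_right
    exact isClosed_le continuous_const (Complex.continuous_re.comp
      (WeakDual.eval_continuous y))
  have htot : IsCompact (Cset ×ˢ Metric.closedBall (0:ℂ) M) :=
    hCcomp.prod (isCompact_closedBall 0 M)
  have hΦmem : ∀ᶠ S in (U : Filter _), Φ S ∈ Cset ×ˢ Metric.closedBall (0:ℂ) M := by
    filter_upwards [hUE] with S hS
    obtain ⟨h1, h2, h3, _⟩ := hp S hS
    refine ⟨⟨?_, ?_⟩, ?_⟩
    · rw [Set.mem_preimage, Metric.mem_closedBall, dist_zero_right]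
      show ‖(InnerProductSpace.toDual ℂ H (p S).2 : StrongDual ℂ H)‖ ≤ 1
      rw [LinearIsometryEquiv.norm_map]
      exact h2
    · show (1:ℝ)/2 ≤ ((InnerProductSpace.toDual ℂ H (p S).2).toWeakDual y).re
      have he : (InnerProductSpace.toDual ℂ H (p S).2).toWeakDual y = ⟪(p S).2, y⟫ := rfl
      rw [he, ← inner_conj_symm, Complex.conj_re]
      exact h3
    · rw [Metric.mem_closedBall, dist_zero_right]
      exact h1
  have hmap : (Cset ×ˢ Metric.closedBall (0:ℂ) M) ∈ (U.map Φ) := hΦmem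
  obtain ⟨q, hqmem, hqlim⟩ := htot.ultrafilter_le_nhds (U.map Φ)
    (Filter.le_principal_iff.mpr hmap)
  obtain ⟨φ, lam0⟩ := q
  have hqlim' : Tendsto Φ (U : Filter _) (𝓝 (φ, lam0)) := hqlim
  set x₀ : H := (InnerProductSpace.toDual ℂ H).symm (WeakDual.toStrongDual φ) with hx₀
  have hφx₀ : ∀ w : H, φ w = ⟪x₀, w⟫ := by
    intro w
    have h1 : InnerProductSpace.toDual ℂ H x₀ = WeakDual.toStrongDual φ :=
      (InnerProductSpace.toDual ℂ H).apply_symm_apply _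
    have h2 : (WeakDual.toStrongDual φ) w = φ w := rfl
    rw [← h2, ← h1, InnerProductSpace.toDual_apply_apply]
  have hx₀1 : ‖x₀‖ ≤ 1 := by
    have h1 := hqmem.1.1
    rw [Set.mem_preimage, Metric.mem_closedBall, dist_zero_right] at h1
    have h2 : ‖x₀‖ = ‖WeakDual.toStrongDual φ‖ :=
      ((InnerProductSpace.toDual ℂ H).symm.norm_map _)
    rw [h2]
    exact h1
  have hx₀re : 1/2 ≤ (⟪y, x₀⟫ : ℂ).re := by
    have h1 := hqmem.1.2
    have h2 : (φ y).re = (⟪y, x₀⟫ : ℂ).re := by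
      rw [hφx₀ y, ← inner_conj_symm, Complex.conj_re]
    have h3 : (1:ℝ)/2 ≤ (φ y).re := h1
    rw [h2] at h3
    exact h3
  have hlam0 : ‖lam0‖ ≤ M := by
    have h1 := hqmem.2
    rwa [Metric.mem_closedBall, dist_zero_right] at h1
  have hweak : ∀ w : H, Tendsto (fun S => (⟪(p S).2, w⟫ : ℂ)) (U : Filter _)
      (𝓝 ⟪x₀, w⟫) := by
    intro w
    have h1 : Tendsto (fun S => (Φ S).1) (U : Filter _) (𝓝 φ) :=
      (continuous_fst.tendsto _).comp hqlim'
    have h2 := ((WeakDual.eval_continuous w).tendsto φ).comp h1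
    have h3 : ∀ S, (Φ S).1 w = ⟪(p S).2, w⟫ := fun S => rfl
    rw [show φ w = ⟪x₀, w⟫ from hφx₀ w] at h2
    exact h2.congr (fun S => h3 S)
  have hlamt : Tendsto (fun S => (p S).1) (U : Filter _) (𝓝 lam0) :=
    (continuous_snd.tendsto _).comp hqlim'
  refine ⟨lam0, hlam0, x₀, hx₀1, hx₀re, ?_⟩
  apply ext_inner_right ℂ
  intro z
  have hA : Tendsto (fun S => (⟪(p S).2, (adjoint T.1) z⟫ : ℂ)) (U : Filter _)
      (𝓝 ⟪x₀, (adjoint T.1) z⟫) := hweak _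
  have hB : Tendsto (fun S => (⟪(p S).2, (adjoint T.1) z⟫ : ℂ)) (U : Filter _)
      (𝓝 ((starRingEnd ℂ) lam0 * ⟪x₀, z⟫)) := by
    have h2a : Tendsto (fun S : Om H M => (⟪(p S).2, (adjoint S.1) z⟫ : ℂ)) (U : Filter _)
        (𝓝 ((starRingEnd ℂ) lam0 * ⟪x₀, z⟫)) := by
      have hlim : Tendsto (fun S : Om H M =>
          (starRingEnd ℂ) ((p S).1) * ⟪(p S).2, z⟫) (U : Filter _)
          (𝓝 ((starRingEnd ℂ) lam0 * ⟪x₀, z⟫)) :=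
        ((Complex.continuous_conj.tendsto _).comp hlamt).mul (hweak z)
      apply hlim.congr'
      filter_upwards [hUE] with S hS
      obtain ⟨_, _, _, h4⟩ := hp S hS
      rw [ContinuousLinearMap.adjoint_inner_right, h4, inner_smul_left]
    have h2b : Tendsto (fun S : Om H M =>
        (⟪(p S).2, (adjoint T.1) z - (adjoint S.1) z⟫ : ℂ)) (U : Filter _) (𝓝 0) := by
      have hTz : Tendsto (fun S : Om H M => (adjoint S.1) z) (U : Filter _)
          (𝓝 ((adjoint T.1) z)) :=
        ((continuous_adj_apply z).tendsto T).mono_left hUnhds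
      have hnz : Tendsto (fun S : Om H M =>
          ‖(adjoint T.1) z - (adjoint S.1) z‖) (U : Filter _) (𝓝 0) := by
        have h0 := (tendsto_const_nhds (x := (adjoint T.1) z)
          (f := (U : Filter (Om H M)))).sub hTz
        rw [sub_self] at h0
        have h1 := h0.norm
        rwa [norm_zero] at h1
      apply squeeze_zero_norm' _ hnz
      filter_upwards [hUE] with S hS
      obtain ⟨_, h2, _, _⟩ := hp S hS
      calc ‖(⟪(p S).2, (adjoint T.1) z - (adjoint S.1) z⟫ : ℂ)‖
          ≤ ‖(p S).2‖ * ‖(adjoint T.1) z - (adjoint S.1) z‖ := norm_inner_le_norm _ _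
        _ ≤ 1 * ‖(adjoint T.1) z - (adjoint S.1) z‖ :=
            mul_le_mul_of_nonneg_right h2 (norm_nonneg _)
        _ = ‖(adjoint T.1) z - (adjoint S.1) z‖ := one_mul _
    have hsum := h2a.add h2b
    rw [add_zero] at hsum
    apply hsum.congr
    intro S
    rw [← inner_add_right]
    congr 1
    abel
  have heq : (⟪x₀, (adjoint T.1) z⟫ : ℂ) = (starRingEnd ℂ) lam0 * ⟪x₀, z⟫ :=
    tendsto_nhds_unique hA hB
  rw [ContinuousLinearMap.adjoint_inner_right] at heq
  rw [heq, inner_smul_left]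

open ContinuousLinearMap in
theorem gdelta_good [TopologicalSpace.SeparableSpace H] (hM0 : 0 < M) :
    IsGδ {T : Om H M | ∀ (c : ℂ) (x : H), T.1 x = c • x → x = 0} := by
  classical
  obtain ⟨D, hDc, hDd⟩ := TopologicalSpace.exists_countable_dense H
  set Ey : H → Set (Om H M) := fun y =>
    {T | ∃ lam : ℂ, ‖lam‖ ≤ M ∧ ∃ x : H, ‖x‖ ≤ 1 ∧ 1/2 ≤ (⟪y, x⟫).re ∧ T.1 x = lam • x}
    with hEy
  have hEq : {T : Om H M | ∀ (c : ℂ) (x : H), T.1 x = c • x → x = 0} = ⋂ y ∈ D, (Ey y)ᶜ := by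
    apply Set.eq_of_subset_of_subset
    · intro T hTg
      rw [Set.mem_iInter₂]
      intro y _
      intro hmem
      obtain ⟨lam, _, x, _, hre, heq⟩ := hmem
      have hx := hTg lam x heq
      rw [hx, inner_zero_right] at hre
      norm_num at hre
    · intro T hTm
      intro c x hcx
      by_contra hx0
      set u : H := (‖x‖⁻¹ : ℂ) • x with hu
      have hu1 : ‖u‖ = 1 := norm_smul_inv_norm hx0
      have hTu : T.1 u = c • u := by
        rw [hu, map_smul, hcx, smul_comm]
      have hcM : ‖c‖ ≤ M := by
        have h1 : ‖T.1 u‖ ≤ M := by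
          refine le_trans (T.1.le_opNorm u) ?_
          rw [hu1, mul_one]
          exact T.2
        rw [hTu, norm_smul, hu1, mul_one] at h1
        exact h1
      obtain ⟨y, hyD, hyu⟩ : ∃ y ∈ D, dist u y < 1/2 := by
        have hh := Metric.dense_iff.mp hDd u (1/2) (by norm_num)
        obtain ⟨y, hy1, hy2⟩ := hh
        exact ⟨y, hy2, by rwa [Metric.mem_ball, dist_comm] at hy1⟩
      have hyre : 1/2 ≤ (⟪y, u⟫ : ℂ).re := by
        have hdec : (⟪y, u⟫ : ℂ) = ⟪u, u⟫ + ⟪y - u, u⟫ := by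
          rw [← inner_add_left]
          congr 1
          abel
        have h1 : (⟪u, u⟫ : ℂ).re = 1 := by
          rw [inner_self_eq_norm_sq_to_K, hu1]
          norm_num
        have h2 : |(⟪y - u, u⟫ : ℂ).re| ≤ ‖y - u‖ := by
          refine le_trans (Complex.abs_re_le_norm _) ?_
          refine le_trans (norm_inner_le_norm _ _) ?_
          rw [hu1, mul_one]
        have h3 : ‖y - u‖ < 1/2 := by
          rw [← dist_eq_norm, dist_comm]
          exact hyu
        rw [hdec, Complex.add_re, h1]
        have h4 := abs_le.mp h2
        linarith
      have hmem : T ∈ Ey y := ⟨c, hcM, u, le_of_eq hu1, hyre, hTu⟩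
      exact (Set.mem_iInter₂.mp hTm y hyD) hmem
  rw [hEq]
  apply IsGδ.biInter hDc
  intro y _
  exact (closed_Ey hM0 y).isOpen_compl.isGδ

end SotStar

/-- For any `M > 1`, the set of operators `T ∈ B_M(H)` having no eigenvalue
(there is no `λ ∈ ℂ` and nonzero `x` with `Tx = λx`) is a dense `Gδ` subset of
`(B_M(H), SOT*)`. -/
theorem statement4 {H : Type*} [NormedAddCommGroup H] [InnerProductSpace ℂ H]
    [CompleteSpace H] [TopologicalSpace.SeparableSpace H]
    (hdim : ¬ FiniteDimensional ℂ H) (M : ℝ) (hM : 1 < M) :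
    @Dense _ (sotStar (H := H) M)
        {T : {T : H →L[ℂ] H // ‖T‖ ≤ M} | ∀ (c : ℂ) (x : H), T.1 x = c • x → x = 0} ∧
    @IsGδ _ (sotStar (H := H) M)
        {T : {T : H →L[ℂ] H // ‖T‖ ≤ M} | ∀ (c : ℂ) (x : H), T.1 x = c • x → x = 0} :=
  ⟨SotStar.dense_good (M := M) hdim hM, SotStar.gdelta_good (M := M) (lt_trans one_pos hM)⟩
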